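/- Monotonicity of the Hellinger-type quantity h under appending a coordinate: if μ_o' = (μ_o, t_o), μ_g' = (μ_g, t_g), Σ_o' = diag(Σ_o, s_o^2) and Σ_g' = diag(Σ_g, s_g^2) with s_o, s_g > 0, then h(μ_o', Σ_o', μ_g', Σ_g') ≥ h(μ_o, Σ_o, μ_g, Σ_g). Consequently h is nondecreasing in the number of coordinates on which the two Gaussians differ. -/

import Mathlib

open MeasureTheory

/-- The Hellinger-type quantity
`h(μ_1, Σ_1, μ_2, Σ_2) = (1 − (det Σ_1)^{1/4}·(det Σ_2)^{1/4} / det((Σ_1+Σ_2)/2)^{1/2}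
  · exp(−(1/8)·(μ_1−μ_2)ᵀ·((Σ_1+Σ_2)/2)⁻¹·(μ_1−μ_2)))^{1/2}`. -/
noncomputable def hGauss {ι : Type*} [Fintype ι] [DecidableEq ι]
    (μ1 : ι → ℝ) (S1 : Matrix ι ι ℝ) (μ2 : ι → ℝ) (S2 : Matrix ι ι ℝ) : ℝ :=
  Real.sqrt (1 -
    S1.det ^ ((1 : ℝ) / 4) * S2.det ^ ((1 : ℝ) / 4)
        / (((2 : ℝ)⁻¹ • (S1 + S2)).det) ^ ((1 : ℝ) / 2)
      * Real.exp (-(1 / 8) *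
          dotProduct (μ1 - μ2) (((2 : ℝ)⁻¹ • (S1 + S2))⁻¹.mulVec (μ1 - μ2))))

noncomputable def phi (m1 m2 w1 w2 : ℝ) : ℝ :=
  w1 ^ ((1:ℝ)/4) * w2 ^ ((1:ℝ)/4) / ((2:ℝ)⁻¹ * (w1 + w2)) ^ ((1:ℝ)/2)
    * Real.exp (-(1/8) * ((m1 - m2) * (((2:ℝ)⁻¹ * (w1 + w2))⁻¹ * (m1 - m2))))

lemma inner_prod_form {n : ℕ} (μ1 μ2 v1 v2 : Fin n → ℝ)
    (h1 : ∀ i, 0 < v1 i) (h2 : ∀ i, 0 < v2 i) :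
    (Matrix.diagonal v1).det ^ ((1:ℝ)/4) * (Matrix.diagonal v2).det ^ ((1:ℝ)/4)
      / (((2:ℝ)⁻¹ • (Matrix.diagonal v1 + Matrix.diagonal v2)).det) ^ ((1:ℝ)/2)
      * Real.exp (-(1/8) * dotProduct (μ1 - μ2)
          (((2:ℝ)⁻¹ • (Matrix.diagonal v1 + Matrix.diagonal v2))⁻¹.mulVec (μ1 - μ2)))
    = ∏ i, phi (μ1 i) (μ2 i) (v1 i) (v2 i) := by
  have hmid : ∀ i, (0:ℝ) < (2:ℝ)⁻¹ * (v1 i + v2 i) := fun i => by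
    have := h1 i; have := h2 i; positivity
  rw [Matrix.diagonal_add, ← Matrix.diagonal_smul]
  rw [Matrix.det_diagonal, Matrix.det_diagonal, Matrix.det_diagonal,
    show (Matrix.diagonal ((2:ℝ)⁻¹ • fun i => v1 i + v2 i))⁻¹
      = Matrix.diagonal (fun i => ((2:ℝ)⁻¹ * (v1 i + v2 i))⁻¹) from
      Matrix.inv_eq_right_inv (by
        rw [Matrix.diagonal_mul_diagonal]
        convert Matrix.diagonal_one using 2
        funext i
        exact mul_inv_cancel₀ (hmid i).ne')]
  have hdp : dotProduct (μ1 - μ2)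
      ((Matrix.diagonal (fun i => ((2:ℝ)⁻¹ * (v1 i + v2 i))⁻¹)).mulVec (μ1 - μ2))
      = ∑ i, (μ1 i - μ2 i) * (((2:ℝ)⁻¹ * (v1 i + v2 i))⁻¹ * (μ1 i - μ2 i)) := by
    simp [dotProduct, Matrix.mulVec_diagonal]
  rw [hdp]
  simp only [Pi.smul_apply, smul_eq_mul]
  rw [← Real.finset_prod_rpow _ _ (fun i _ => (h1 i).le),
      ← Real.finset_prod_rpow _ _ (fun i _ => (h2 i).le),
      ← Real.finset_prod_rpow _ _ (fun i _ => (hmid i).le)]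
  rw [show (-(1/8) : ℝ) * _ = ∑ i, -(1/8) * ((μ1 i - μ2 i) * (((2:ℝ)⁻¹ * (v1 i + v2 i))⁻¹ * (μ1 i - μ2 i))) from Finset.mul_sum _ _ _, Real.exp_sum]
  rw [← Finset.prod_mul_distrib, ← Finset.prod_div_distrib, ← Finset.prod_mul_distrib]
  rfl

lemma phi_pos {m1 m2 w1 w2 : ℝ} (h1 : 0 < w1) (h2 : 0 < w2) :
    0 < phi m1 m2 w1 w2 := by
  unfold phi; positivity

lemma phi_le_one {m1 m2 s1 s2 : ℝ} (h1 : 0 < s1) (h2 : 0 < s2) :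
    phi m1 m2 (s1 ^ 2) (s2 ^ 2) ≤ 1 := by
  have hmid : (0:ℝ) < (2:ℝ)⁻¹ * (s1 ^ 2 + s2 ^ 2) := by positivity
  unfold phi
  have hfrac : (s1 ^ 2) ^ ((1:ℝ)/4) * (s2 ^ 2) ^ ((1:ℝ)/4)
      / ((2:ℝ)⁻¹ * (s1 ^ 2 + s2 ^ 2)) ^ ((1:ℝ)/2) ≤ 1 := by
    rw [div_le_one (by positivity)]
    have e1 : (s1 ^ 2) ^ ((1:ℝ)/4) * (s2 ^ 2) ^ ((1:ℝ)/4)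
        = (s1 * s2) ^ ((1:ℝ)/2) := by
      rw [← Real.rpow_natCast s1 2, ← Real.rpow_natCast s2 2,
        ← Real.rpow_mul h1.le, ← Real.rpow_mul h2.le,
        Real.mul_rpow h1.le h2.le]
      norm_num
    rw [e1]
    exact Real.rpow_le_rpow (by positivity)
      (by nlinarith [sq_nonneg (s1 - s2)]) (by norm_num)
  have hexp : Real.exp (-(1/8) * ((m1 - m2) *
      (((2:ℝ)⁻¹ * (s1 ^ 2 + s2 ^ 2))⁻¹ * (m1 - m2)))) ≤ 1 := by
    rw [Real.exp_le_one_iff]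
    have : 0 ≤ (m1 - m2) * (((2:ℝ)⁻¹ * (s1 ^ 2 + s2 ^ 2))⁻¹ * (m1 - m2)) := by
      rw [show (m1 - m2) * (((2:ℝ)⁻¹ * (s1 ^ 2 + s2 ^ 2))⁻¹ * (m1 - m2))
          = ((2:ℝ)⁻¹ * (s1 ^ 2 + s2 ^ 2))⁻¹ * (m1 - m2) ^ 2 by ring]
      positivity
    nlinarith
  exact mul_le_one₀ hfrac (Real.exp_pos _).le hexp

/-- Monotonicity of the Hellinger-type quantity `h` under appending a coordinate: if
`μ_o' = (μ_o, t_o)`, `μ_g' = (μ_g, t_g)`, `Σ_o' = diag(Σ_o, s_o²)` and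
`Σ_g' = diag(Σ_g, s_g²)` with `s_o, s_g > 0`, then
`h(μ_o', Σ_o', μ_g', Σ_g') ≥ h(μ_o, Σ_o, μ_g, Σ_g)`. -/
theorem hGauss_mono_append
    (m : ℕ) (μo μg : Fin m → ℝ) (vo vg : Fin m → ℝ)
    (hvo : ∀ i, 0 < vo i) (hvg : ∀ i, 0 < vg i)
    (tO tG sO sG : ℝ) (hsO : 0 < sO) (hsG : 0 < sG) :
    hGauss (Fin.snoc μo tO) (Matrix.diagonal (Fin.snoc vo (sO ^ 2)))
        (Fin.snoc μg tG) (Matrix.diagonal (Fin.snoc vg (sG ^ 2)))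
      ≥ hGauss μo (Matrix.diagonal vo) μg (Matrix.diagonal vg) := by
  have hvo' : ∀ i : Fin (m + 1), (Fin.snoc vo (sO ^ 2) : Fin (m + 1) → ℝ) i > 0 := fun i => by
    induction i using Fin.lastCases with
    | last => simpa using by positivity
    | cast j => simpa using hvo j
  have hvg' : ∀ i : Fin (m + 1), (Fin.snoc vg (sG ^ 2) : Fin (m + 1) → ℝ) i > 0 := fun i => by
    induction i using Fin.lastCases with
    | last => simpa using by positivity
    | cast j => simpa using hvg j
  unfold hGauss
  rw [inner_prod_form _ _ _ _ hvo hvg, inner_prod_form _ _ _ _ hvo' hvg']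
  apply Real.sqrt_le_sqrt
  have hprod : ∏ i : Fin (m + 1),
      phi ((Fin.snoc μo tO : Fin (m + 1) → ℝ) i) ((Fin.snoc μg tG : Fin (m + 1) → ℝ) i)
        ((Fin.snoc vo (sO ^ 2) : Fin (m + 1) → ℝ) i) ((Fin.snoc vg (sG ^ 2) : Fin (m + 1) → ℝ) i)
      = (∏ i : Fin m, phi (μo i) (μg i) (vo i) (vg i))
        * phi tO tG (sO ^ 2) (sG ^ 2) := by
    rw [Fin.prod_univ_castSucc]
    simp
  rw [hprod]
  have h1 : 0 ≤ ∏ i : Fin m, phi (μo i) (μg i) (vo i) (vg i) :=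
    Finset.prod_nonneg fun i _ => (phi_pos (hvo i) (hvg i)).le
  nlinarith [phi_le_one (m1 := tO) (m2 := tG) hsO hsG,
    (phi_pos (m1 := tO) (m2 := tG) (by positivity : (0:ℝ) < sO^2) (by positivity : (0:ℝ) < sG^2)).le]
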